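/- In a cartesian differential category, the distributivity isomorphism σ = ⟨⟨π₁∘π₁, π₁∘π₂⟩, ⟨π₂∘π₁, π₂∘π₂⟩⟩ : TTX → TTX is a natural transformation T² → T² (i.e., T(T(f)) ∘ σ = σ ∘ T(T(f)) for all f) and is a distributive law of the tangent bundle monad T over itself: σ∘T(η) = η T, σ∘ηT = T(η), σ∘T(μ) = μT∘T(σ)∘σT, and σ∘μT = T(μ)∘σT∘T(σ). -/
import Mathlib


open CategoryTheory

universe v u

/-- Hom-sets carry a commutative additive monoid structure. -/
class HomAdd (C : Type u) [Category.{v} C] where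
  homMonoid : ∀ X Y : C, AddCommMonoid (X ⟶ Y)

attribute [instance] HomAdd.homMonoid

/-- A morphism is additive if it preserves the additive structure under
precomposition. -/
def IsAdditive {C : Type u} [Category.{v} C] [HomAdd C] {X Y : C} (f : X ⟶ Y) : Prop :=
  (∀ {W : C} (g h : W ⟶ X), (g + h) ≫ f = g ≫ f + h ≫ f) ∧
  (∀ {W : C}, (0 : W ⟶ X) ≫ f = 0)

/-- A cartesian left-additive category: a category with chosen finite products,
hom-sets commutative monoids, composition is left-additive (precomposition
preserves sums), projections are additive, and pairings of additive
morphisms are additive. -/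
class CLAC (C : Type u) [Category.{v} C] extends HomAdd C where
  P : C → C → C
  p1 : ∀ {X Y : C}, P X Y ⟶ X
  p2 : ∀ {X Y : C}, P X Y ⟶ Y
  pair : ∀ {Z X Y : C}, (Z ⟶ X) → (Z ⟶ Y) → (Z ⟶ P X Y)
  pair_fst : ∀ {Z X Y : C} (f : Z ⟶ X) (g : Z ⟶ Y), pair f g ≫ p1 = f
  pair_snd : ∀ {Z X Y : C} (f : Z ⟶ X) (g : Z ⟶ Y), pair f g ≫ p2 = g
  pair_ext : ∀ {Z X Y : C} (h k : Z ⟶ P X Y),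
    h ≫ p1 = k ≫ p1 → h ≫ p2 = k ≫ p2 → h = k
  one : C
  bang : ∀ X : C, X ⟶ one
  bang_unique : ∀ {X : C} (f : X ⟶ one), f = bang X
  comp_add : ∀ {X Y Z : C} (f : X ⟶ Y) (g h : Y ⟶ Z),
    f ≫ (g + h) = f ≫ g + f ≫ h
  comp_zero : ∀ {X Y Z : C} (f : X ⟶ Y), f ≫ (0 : Y ⟶ Z) = 0
  p1_additive : ∀ {X Y : C}, IsAdditive (p1 (X := X) (Y := Y))
  p2_additive : ∀ {X Y : C}, IsAdditive (p2 (X := X) (Y := Y))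
  pair_additive : ∀ {Z X Y : C} (f : Z ⟶ X) (g : Z ⟶ Y),
    IsAdditive f → IsAdditive g → IsAdditive (pair f g)

namespace CLAC

variable {C : Type u} [Category.{v} C] [CLAC C]

/-- The product of two morphisms, `f × g = ⟨f ∘ π₁, g ∘ π₂⟩`. -/
def prodMor {W X Y Z : C} (f : W ⟶ Y) (g : X ⟶ Z) : P W X ⟶ P Y Z :=
  pair (p1 ≫ f) (p2 ≫ g)

end CLAC

open CLAC

/-- A cartesian differential category: a cartesian left-additive category
equipped with a differential operator `D` satisfying axioms D1–D7. -/
class CDC (C : Type u) [Category.{v} C] extends CLAC C where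
  D : ∀ {X Y : C}, (X ⟶ Y) → (P X X ⟶ Y)
  D1 : ∀ {X Y : C} (f g : X ⟶ Y), D (f + g) = D f + D g
  D1' : ∀ {X Y : C}, D (0 : X ⟶ Y) = 0
  D2 : ∀ {W X Y : C} (f : X ⟶ Y) (h k v : W ⟶ X),
    pair (h + k) v ≫ D f = pair h v ≫ D f + pair k v ≫ D f
  D2' : ∀ {W X Y : C} (f : X ⟶ Y) (v : W ⟶ X), pair 0 v ≫ D f = 0
  D3 : ∀ {X : C}, D (𝟙 X) = p1
  D3₁ : ∀ {X Y : C}, D (p1 (X := X) (Y := Y)) = p1 ≫ p1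
  D3₂ : ∀ {X Y : C}, D (p2 (X := X) (Y := Y)) = p1 ≫ p2
  D4 : ∀ {Z X Y : C} (f : Z ⟶ X) (g : Z ⟶ Y), D (pair f g) = pair (D f) (D g)
  D5 : ∀ {X Y Z : C} (g : X ⟶ Y) (f : Y ⟶ Z),
    D (g ≫ f) = pair (D g) (p2 ≫ g) ≫ D f
  D6 : ∀ {W X Y : C} (f : X ⟶ Y) (g h k : W ⟶ X),
    pair (pair g 0) (pair h k) ≫ D (D f) = pair g k ≫ D f
  D7 : ∀ {W X Y : C} (f : X ⟶ Y) (g h k : W ⟶ X),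
    pair (pair 0 h) (pair g k) ≫ D (D f) = pair (pair 0 g) (pair h k) ≫ D (D f)

namespace CDC

variable {C : Type u} [Category.{v} C] [CDC C]

/-- The tangent bundle functor on morphisms: `T(f) = ⟨D(f), f ∘ π₂⟩`. -/
def Tm {X Y : C} (f : X ⟶ Y) : P X X ⟶ P Y Y :=
  pair (D f) (p2 ≫ f)

/-- The unit `η_X = ⟨0, id⟩ : X ⟶ TX`. -/
def η (X : C) : X ⟶ P X X := pair 0 (𝟙 X)

/-- The multiplication `μ_X = ⟨π₂∘π₁ + π₁∘π₂, π₂∘π₂⟩ : TTX ⟶ TX`. -/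
def μ (X : C) : P (P X X) (P X X) ⟶ P X X :=
  pair (p1 ≫ p2 + p2 ≫ p1) (p2 ≫ p2)

/-- The (right) tensorial strength `t_{X,Y} = ⟨⟨0, π₁∘π₂⟩, ⟨π₁, π₂∘π₂⟩⟩`. -/
def t (X Y : C) : P X (P Y Y) ⟶ P (P X Y) (P X Y) :=
  pair (pair 0 (p2 ≫ p1)) (pair p1 (p2 ≫ p2))

/-- The left tensorial strength `t'_{X,Y} = ⟨⟨π₁∘π₁, 0⟩, ⟨π₂∘π₁, π₂⟩⟩`. -/
def t' (X Y : C) : P (P X X) Y ⟶ P (P X Y) (P X Y) :=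
  pair (pair (p1 ≫ p1) 0) (pair (p1 ≫ p2) p2)

/-- The distributivity isomorphism
`σ = ⟨⟨π₁∘π₁, π₁∘π₂⟩, ⟨π₂∘π₁, π₂∘π₂⟩⟩ : (A×B)×(E×F) ⟶ (A×E)×(B×F)`. -/
def Sig (A B E F : C) : P (P A B) (P E F) ⟶ P (P A E) (P B F) :=
  pair (pair (p1 ≫ p1) (p2 ≫ p1)) (pair (p1 ≫ p2) (p2 ≫ p2))

/-- The symmetry `c_{X,Y} = ⟨π₂, π₁⟩`. -/
def symm (X Y : C) : P X Y ⟶ P Y X := pair p2 p1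

/-- The left unitor `ℓ_X = ⟨!_X, id⟩ : X ⟶ 1 × X`. -/
def lUnit (X : C) : X ⟶ P one X := pair (bang X) (𝟙 X)

/-- The associator `a_{X,Y,Z} = ⟨π₁∘π₁, ⟨π₂∘π₁, π₂⟩⟩`. -/
def assoc (X Y Z : C) : P (P X Y) Z ⟶ P X (P Y Z) :=
  pair (p1 ≫ p1) (pair (p1 ≫ p2) p2)

/-- The monoidal structure map `ψ_{X,Y} = ⟨π₁×π₁, π₂×π₂⟩ : TX×TY ⟶ T(X×Y)`. -/
def ψ (X Y : C) : P (P X X) (P Y Y) ⟶ P (P X Y) (P X Y) :=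
  pair (prodMor p1 p1) (prodMor p2 p2)

end CDC

open CDC

variable {C : Type u} [Category.{v} C] [CDC C]

section Helpers

attribute [local simp] pair_fst pair_snd comp_add comp_zero
  D1 D1' D3 D3₁ D3₂ D4 D5

@[local simp] lemma pair_fst_assoc {Z X Y W : C} (f : Z ⟶ X) (g : Z ⟶ Y) (k : X ⟶ W) :
    pair f g ≫ p1 ≫ k = f ≫ k := by rw [← Category.assoc, pair_fst]

@[local simp] lemma pair_snd_assoc {Z X Y W : C} (f : Z ⟶ X) (g : Z ⟶ Y) (k : Y ⟶ W) :
    pair f g ≫ p2 ≫ k = g ≫ k := by rw [← Category.assoc, pair_snd]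

@[local simp] lemma comp_pair {W Z X Y : C} (f : W ⟶ Z) (g : Z ⟶ X) (h : Z ⟶ Y) :
    f ≫ pair g h = pair (f ≫ g) (f ≫ h) :=
  pair_ext _ _ (by rw [Category.assoc, pair_fst, pair_fst])
    (by rw [Category.assoc, pair_snd, pair_snd])

@[local simp] lemma zero_p1 {W X Y : C} : (0 : W ⟶ P X Y) ≫ p1 = 0 := p1_additive.2

@[local simp] lemma zero_p2 {W X Y : C} : (0 : W ⟶ P X Y) ≫ p2 = 0 := p2_additive.2

@[local simp] lemma zero_p1_assoc {W X Y Z : C} (k : X ⟶ Z) :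
    (0 : W ⟶ P X Y) ≫ p1 ≫ k = (0 : W ⟶ X) ≫ k := by rw [← Category.assoc, zero_p1]

@[local simp] lemma zero_p2_assoc {W X Y Z : C} (k : Y ⟶ Z) :
    (0 : W ⟶ P X Y) ≫ p2 ≫ k = (0 : W ⟶ Y) ≫ k := by rw [← Category.assoc, zero_p2]

@[local simp] lemma add_p1 {W X Y : C} (g h : W ⟶ P X Y) :
    (g + h) ≫ p1 = g ≫ p1 + h ≫ p1 := p1_additive.1 g h

@[local simp] lemma add_p2 {W X Y : C} (g h : W ⟶ P X Y) :
    (g + h) ≫ p2 = g ≫ p2 + h ≫ p2 := p2_additive.1 g h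

@[local simp] lemma add_p1_assoc {W X Y Z : C} (g h : W ⟶ P X Y) (k : X ⟶ Z) :
    (g + h) ≫ p1 ≫ k = (g ≫ p1 + h ≫ p1) ≫ k := by rw [← Category.assoc, add_p1]

@[local simp] lemma add_p2_assoc {W X Y Z : C} (g h : W ⟶ P X Y) (k : Y ⟶ Z) :
    (g + h) ≫ p2 ≫ k = (g ≫ p2 + h ≫ p2) ≫ k := by rw [← Category.assoc, add_p2]

@[local simp] lemma pair_zero_zero {W X Y : C} :
    pair (0 : W ⟶ X) (0 : W ⟶ Y) = 0 :=
  pair_ext _ _ (by simp) (by simp)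

@[local simp] lemma pair_p1_p2 {X Y : C} :
    pair (p1 : P X Y ⟶ X) p2 = 𝟙 (P X Y) :=
  pair_ext _ _ (by simp) (by simp)

@[local simp] lemma pair_proj {W X Y : C} (h : W ⟶ P X Y) :
    pair (h ≫ p1) (h ≫ p2) = h :=
  pair_ext _ _ (by simp) (by simp)

lemma pair_decomp {W X Y : C} (a : W ⟶ X) (b : W ⟶ Y) :
    pair a b = pair a 0 + pair 0 b :=
  pair_ext _ _ (by simp) (by simp)

lemma DD_symm {X Y : C} (f : X ⟶ Y) {W : C} (a b c d : W ⟶ X) :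
    pair (pair a b) (pair c d) ≫ D (D f) =
      pair (pair a c) (pair b d) ≫ D (D f) := by
  have h1 : pair (pair a b) (pair c d) ≫ D (D f) =
      pair (pair a 0) (pair c d) ≫ D (D f) +
        pair (pair 0 b) (pair c d) ≫ D (D f) := by
    rw [← D2, ← pair_decomp]
  have h2 : pair (pair a c) (pair b d) ≫ D (D f) =
      pair (pair a 0) (pair b d) ≫ D (D f) +
        pair (pair 0 c) (pair b d) ≫ D (D f) := by
    rw [← D2, ← pair_decomp]
  rw [h1, h2, D6, D6, D7]

@[local simp] lemma comp_pair_assoc {W Z X Y V : C} (f : W ⟶ Z) (g : Z ⟶ X)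
    (h : Z ⟶ Y) (k : P X Y ⟶ V) :
    f ≫ pair g h ≫ k = pair (f ≫ g) (f ≫ h) ≫ k := by
  rw [← Category.assoc, comp_pair]

@[local simp] lemma Sig_DD {X Y : C} (f : X ⟶ Y) :
    pair (pair (p1 ≫ p1) (p2 ≫ p1)) (pair (p1 ≫ p2) (p2 ≫ p2)) ≫ D (D f)
      = D (D f) := by
  have h := DD_symm f (p1 ≫ p1) (p1 ≫ p2) (p2 ≫ p1) (p2 ≫ p2)
  simp only [pair_proj, pair_p1_p2, Category.id_comp] at h
  rw [← h]

end Helpers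

/-- `σ` is a natural transformation `T² ⟶ T²` and a distributive law of the
tangent bundle monad over itself. -/
theorem sigma_distributive_law (X Y : C) (f : X ⟶ Y) :
    Sig X X X X ≫ Tm (Tm f) = Tm (Tm f) ≫ Sig Y Y Y Y ∧
    Tm (η X) ≫ Sig X X X X = η (P X X) ∧
    η (P X X) ≫ Sig X X X X = Tm (η X) ∧
    Tm (μ X) ≫ Sig X X X X =
      Sig (P X X) (P X X) (P X X) (P X X) ≫ Tm (Sig X X X X) ≫ μ (P X X) ∧
    μ (P X X) ≫ Sig X X X X =
      Tm (Sig X X X X) ≫ Sig (P X X) (P X X) (P X X) (P X X) ≫ Tm (μ X) := by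
  refine ⟨?_, ?_, ?_, ?_, ?_⟩ <;>
    apply pair_ext <;> apply pair_ext <;>
    simp [Tm, η, μ, Sig, pair_fst, pair_snd, comp_add, comp_zero,
      D1, D1', D3, D3₁, D3₂, D4, D5, pair_fst_assoc, pair_snd_assoc,
      comp_pair, zero_p1, zero_p2, zero_p1_assoc, zero_p2_assoc,
      add_p1, add_p2, add_p1_assoc, add_p2_assoc, pair_zero_zero,
      pair_p1_p2, pair_proj, Sig_DD, comp_pair_assoc]
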